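/- Equivalence theorem for vakonomic mechanics (local coordinate form): let 𝔏 : ℝ^n × ℝ^n × ℝ^m → ℝ be continuously differentiable, let E(q,v,p,λ) = p·v − 𝔏(q,v,λ), let Ω̄ be the bilinear form on ℝ^n × ℝ^n × ℝ^n × ℝ^m given by Ω̄((q̇,v̇,ṗ,λ̇),(δq,δv,δp,δλ)) = q̇·δp − ṗ·δq, and let Ω̂ be the bilinear form on ℝ^n × ℝ^n × ℝ^m given by Ω̂((q̇,ṗ,λ̇),(δq,δp,δλ)) = q̇·δp − ṗ·δq. For a continuously differentiable curve x(t) = (q(t),v(t),p(t),λ(t)) : [t₁,t₂] → ℝ^n × ℝ^n × ℝ^n × ℝ^m with t₁ < t₂, the following are equivalent: (1) for every continuously differentiable variation (δq,δv,δp,δλ) with δq(t₁) = δq(t₂) = 0, the function s ↦ ∫_{t₁}^{t₂} [ 𝔏(q+sδq, v+sδv, λ+sδλ) + (p+sδp)·(q'+sδq' − v − sδv) ] dt has derivative zero at s = 0; (2) for all t, the linear functional Ω̄(x'(t), ·) equals the Fréchet derivative of E at x(t); (3) for all t: p(t) = ∂𝔏/∂v, q'(t) = v(t), p'(t) = ∂𝔏/∂q,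 and ∂𝔏/∂λ = 0, all evaluated at (q(t),v(t),λ(t)); (4) for all t: p(t) = ∂𝔏/∂v(q(t),v(t),λ(t)) and the linear functional Ω̂((q'(t),p'(t),λ'(t)), ·) equals (δq,δp,δλ) ↦ (−∂𝔏/∂q)·δq + v(t)·δp + (∂𝔏/∂λ)·δλ evaluated at (q(t),v(t),λ(t)). -/

import Mathlib

set_option maxHeartbeats 1600000

open scoped BigOperators
open MeasureTheory intervalIntegral Metric Set

def dot {k : ℕ} (x y : Fin k → ℝ) : ℝ := ∑ i, x i * y i

lemma dot_comm {k : ℕ} (x y : Fin k → ℝ) : dot x y = dot y x := by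
  unfold dot; exact Finset.sum_congr rfl fun i _ => mul_comm _ _

lemma dot_zero_left {k : ℕ} (y : Fin k → ℝ) : dot 0 y = 0 := by simp [dot]

lemma dot_zero_right {k : ℕ} (x : Fin k → ℝ) : dot x 0 = 0 := by simp [dot]

lemma dot_neg_left {k : ℕ} (x y : Fin k → ℝ) : dot (-x) y = -dot x y := by
  simp [dot, Finset.sum_neg_distrib]

lemma dot_single_right {k : ℕ} (x : Fin k → ℝ) (i : Fin k) :
    dot x (Pi.single i 1) = x i := by
  unfold dot
  rw [Finset.sum_eq_single i]
  · simp
  · intro j _ hj; simp [Pi.single_apply, hj]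
  · simp

lemma dot_single_left {k : ℕ} (x : Fin k → ℝ) (i : Fin k) :
    dot (Pi.single i 1) x = x i := by
  rw [dot_comm]; exact dot_single_right x i

lemma dot_smul_left {k : ℕ} (c : ℝ) (x y : Fin k → ℝ) :
    dot (c • x) y = c * dot x y := by
  simp [dot, Finset.mul_sum]
  exact Finset.sum_congr rfl fun i _ => by ring

lemma dot_neg_right {k : ℕ} (x y : Fin k → ℝ) : dot x (-y) = -dot x y := by
  simp [dot, Finset.sum_neg_distrib]

lemma dot_smul_right {k : ℕ} (c : ℝ) (x y : Fin k → ℝ) :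
    dot x (c • y) = c * dot x y := by
  simp [dot, Finset.mul_sum]
  exact Finset.sum_congr rfl fun i _ => by ring

lemma dot_sub_right {k : ℕ} (x y z : Fin k → ℝ) :
    dot x (y - z) = dot x y - dot x z := by
  simp [dot, mul_sub, Finset.sum_sub_distrib]

lemma hasDerivAt_comp_proj {k : ℕ} {p : ℝ → Fin k → ℝ} {d : Fin k → ℝ} {t : ℝ}
    (h : HasDerivAt p d t) (i : Fin k) :
    HasDerivAt (fun t => p t i) (d i) t := by
  have := (ContinuousLinearMap.proj (R := ℝ) (φ := fun _ : Fin k => ℝ) i).hasFDerivAt.comp_hasDerivAt t h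
  exact hasDerivAt_pi.1 h i

lemma hasDerivAt_dot {k : ℕ} {a b : ℝ → Fin k → ℝ} {a' b' : Fin k → ℝ} {t : ℝ}
    (ha : HasDerivAt a a' t) (hb : HasDerivAt b b' t) :
    HasDerivAt (fun t => dot (a t) (b t)) (dot a' (b t) + dot (a t) b') t := by
  have : HasDerivAt (fun t => ∑ i, a t i * b t i)
      (∑ i, (a' i * b t i + a t i * b' i)) t := by
    apply HasDerivAt.fun_sum
    intro i _
    exact (hasDerivAt_comp_proj ha i).mul (hasDerivAt_comp_proj hb i)
  simpa [dot, Finset.sum_add_distrib] using this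

lemma contDiff_curve_hasDerivAt {k : ℕ} {p : ℝ → Fin k → ℝ} (h : ContDiff ℝ 1 p) (t : ℝ) :
    HasDerivAt p (deriv p t) t :=
  (h.differentiable one_ne_zero t).hasDerivAt

lemma continuous_dot {X : Type*} [TopologicalSpace X] {k : ℕ} {a b : X → Fin k → ℝ}
    (ha : Continuous a) (hb : Continuous b) :
    Continuous (fun x => dot (a x) (b x)) := by
  unfold dot
  exact continuous_finset_sum _ fun i _ =>
    ((continuous_apply i).comp ha).mul ((continuous_apply i).comp hb)

lemma fundamental_lemma {t₁ t₂ : ℝ} (ht : t₁ < t₂) {w : ℝ → ℝ} (hw : Continuous w)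
    (h : ∀ φ : ℝ → ℝ, ContDiff ℝ 1 φ → φ t₁ = 0 → φ t₂ = 0 →
      (∫ t in t₁..t₂, φ t * w t) = 0) :
    ∀ t ∈ Set.Icc t₁ t₂, w t = 0 := by
  have hIoo : ∀ t ∈ Set.Ioo t₁ t₂, w t = 0 := by
    intro t₀ ht₀
    by_contra hc
    set c := w t₀ with hcdef
    have hc2 : 0 < c ^ 2 := by positivity
    have hopen : IsOpen ({t | c ^ 2 / 2 < w t * c} ∩ Set.Ioo t₁ t₂) := by
      refine IsOpen.inter ?_ isOpen_Ioo
      exact isOpen_lt continuous_const (hw.mul continuous_const)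
    have hmem : t₀ ∈ ({t | c ^ 2 / 2 < w t * c} ∩ Set.Ioo t₁ t₂) := by
      constructor
      · simp only [Set.mem_setOf_eq, ← hcdef]
        nlinarith
      · exact ht₀
    obtain ⟨ε, hε, hball⟩ := Metric.isOpen_iff.1 hopen t₀ hmem
    set f : ContDiffBump t₀ := ⟨ε / 2, ε, by positivity, by linarith⟩ with hf
    have hφcd : ContDiff ℝ 1 (fun t => c * f t) := contDiff_const.mul f.contDiff
    have hsub : Metric.ball t₀ ε ⊆ Set.Ioo t₁ t₂ := fun x hx => (hball hx).2
    have hsign : ∀ x ∈ Metric.ball t₀ ε, c ^ 2 / 2 < w x * c := fun x hx => (hball hx).1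
    have hb1 : f t₁ = 0 := by
      apply f.zero_of_le_dist
      by_contra hlt
      push_neg at hlt
      exact absurd (hsub (Metric.mem_ball.2 hlt)).1 (lt_irrefl t₁)
    have hb2 : f t₂ = 0 := by
      apply f.zero_of_le_dist
      by_contra hlt
      push_neg at hlt
      exact absurd (hsub (Metric.mem_ball.2 hlt)).2 (lt_irrefl t₂)
    have key := h (fun t => c * f t) hφcd (by simp [hb1]) (by simp [hb2])
    set g : ℝ → ℝ := fun t => c * f t * w t with hg
    have hgcont : Continuous g := (continuous_const.mul f.continuous).mul hw
    have hgnn : ∀ t, 0 ≤ g t := by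
      intro t
      rcases eq_or_ne (f t) 0 with h0 | h0
      · simp [hg, h0]
      · have htb : t ∈ Metric.ball t₀ ε := by
          rw [← f.support_eq]; exact h0
        have := hsign t htb
        have hfpos := f.pos_of_mem_ball htb
        have : 0 < w t * c := lt_trans (by positivity) this
        have hmul : 0 < f t * (w t * c) := mul_pos hfpos this
        show 0 ≤ c * (f : ℝ → ℝ) t * w t
        nlinarith [hmul]
    have hmemball : ∀ x ∈ Set.Icc (t₀ - ε/2) (t₀ + ε/2), x ∈ Metric.closedBall t₀ (ε/2) := by
      intro x hx
      rw [Metric.mem_closedBall, Real.dist_eq, abs_le]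
      constructor <;> [linarith [hx.1]; linarith [hx.2]]
    have hgpos : ∀ x ∈ Set.Ioo (t₀ - ε/2) (t₀ + ε/2), 0 < g x := by
      intro x hx
      have h1 : f x = 1 := f.one_of_mem_closedBall (hmemball x (Set.mem_Icc.2 ⟨hx.1.le, hx.2.le⟩))
      have hxball : x ∈ Metric.ball t₀ ε := by
        rw [Metric.mem_ball, Real.dist_eq, abs_lt]
        constructor <;> [linarith [hx.1]; linarith [hx.2]]
      have := hsign x hxball
      have : 0 < w x * c := lt_trans (by positivity) this
      simp only [hg, h1, mul_one]
      nlinarith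
    have ha1 : t₁ < t₀ - ε/2 := by
      have : t₀ - ε/2 ∈ Metric.ball t₀ ε := by
        rw [Metric.mem_ball, Real.dist_eq]
        rw [abs_lt]; constructor <;> linarith
      exact (hsub this).1
    have ha2 : t₀ + ε/2 < t₂ := by
      have : t₀ + ε/2 ∈ Metric.ball t₀ ε := by
        rw [Metric.mem_ball, Real.dist_eq]
        rw [abs_lt]; constructor <;> linarith
      exact (hsub this).2
    have hi1 : IntervalIntegrable g MeasureTheory.volume t₁ (t₀ - ε/2) :=
      hgcont.intervalIntegrable _ _
    have hi2 : IntervalIntegrable g MeasureTheory.volume (t₀ - ε/2) (t₀ + ε/2) :=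
      hgcont.intervalIntegrable _ _
    have hi3 : IntervalIntegrable g MeasureTheory.volume (t₀ + ε/2) t₂ :=
      hgcont.intervalIntegrable _ _
    have hsplit : (∫ t in t₁..t₂, g t) =
        (∫ t in t₁..(t₀ - ε/2), g t) + (∫ t in (t₀ - ε/2)..(t₀ + ε/2), g t)
          + (∫ t in (t₀ + ε/2)..t₂, g t) := by
      rw [integral_add_adjacent_intervals hi1 hi2,
        integral_add_adjacent_intervals (hi1.trans hi2) hi3]
    have h1nn : 0 ≤ ∫ t in t₁..(t₀ - ε/2), g t :=
      integral_nonneg (by linarith) (fun u _ => hgnn u)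
    have h3nn : 0 ≤ ∫ t in (t₀ + ε/2)..t₂, g t :=
      integral_nonneg (by linarith) (fun u _ => hgnn u)
    have h2pos : 0 < ∫ t in (t₀ - ε/2)..(t₀ + ε/2), g t :=
      intervalIntegral_pos_of_pos_on hi2 hgpos (by linarith)
    have : (0:ℝ) < ∫ t in t₁..t₂, g t := by rw [hsplit]; linarith
    rw [show (∫ t in t₁..t₂, g t) = ∫ t in t₁..t₂, (fun t => c * f t) t * w t from rfl] at this
    rw [key] at this
    exact lt_irrefl 0 this
  intro t htm
  have hclos : Set.EqOn w 0 (closure (Set.Ioo t₁ t₂)) :=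
    Set.EqOn.closure (fun x hx => hIoo x hx) hw continuous_const
  rw [closure_Ioo ht.ne] at hclos
  exact hclos htm

lemma hasDerivAt_affine_pi {k : ℕ} (w u : Fin k → ℝ) (s₀ : ℝ) :
    HasDerivAt (fun s : ℝ => w + s • u) u s₀ := by
  have h := ((hasDerivAt_id s₀).smul_const u).const_add w
  simpa using h

lemma hasDerivAt_dot_affine {k : ℕ} (a b c d e f : Fin k → ℝ) (s : ℝ) :
    HasDerivAt (fun s : ℝ => dot (a + s • b) (c + s • d - e - s • f))
      (dot b (c + s • d - e - s • f) + dot (a + s • b) (d - f)) s := by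
  have h : HasDerivAt
      (fun s : ℝ => ∑ i, (a i + s * b i) * (c i + s * d i - e i - s * f i))
      (∑ i, (b i * (c i + s * d i - e i - s * f i) + (a i + s * b i) * (d i - f i))) s := by
    apply HasDerivAt.fun_sum
    intro i _
    have h1 : HasDerivAt (fun s : ℝ => a i + s * b i) (b i) s := by
      simpa using ((hasDerivAt_id s).mul_const (b i)).const_add (a i)
    have h2 : HasDerivAt (fun s : ℝ => c i + s * d i - e i - s * f i) (d i - f i) s := by
      have := ((((hasDerivAt_id s).mul_const (d i)).const_add (c i)).sub_const
        (e i)).fun_sub ((hasDerivAt_id s).mul_const (f i))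
      simpa using this
    exact h1.mul h2
  simpa [dot, Finset.sum_add_distrib] using h

lemma G_eq_fderiv {n m : ℕ}
    (𝔏 : (Fin n → ℝ) × (Fin n → ℝ) × (Fin m → ℝ) → ℝ)
    (Gq Gv : (Fin n → ℝ) × (Fin n → ℝ) × (Fin m → ℝ) → Fin n → ℝ)
    (Gl : (Fin n → ℝ) × (Fin n → ℝ) × (Fin m → ℝ) → Fin m → ℝ)
    (h𝔏 : ContDiff ℝ 1 𝔏)
    (hG : ∀ x : (Fin n → ℝ) × (Fin n → ℝ) × (Fin m → ℝ),
      ∃ f : ((Fin n → ℝ) × (Fin n → ℝ) × (Fin m → ℝ)) →L[ℝ] ℝ,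
        HasFDerivAt 𝔏 f x ∧
        ∀ y : (Fin n → ℝ) × (Fin n → ℝ) × (Fin m → ℝ),
          f y = dot (Gq x) y.1 + dot (Gv x) y.2.1 + dot (Gl x) y.2.2) :
    Continuous Gq ∧ Continuous Gv ∧ Continuous Gl := by
  have hfd : Continuous (fderiv ℝ 𝔏) := h𝔏.continuous_fderiv one_ne_zero
  have key : ∀ x, fderiv ℝ 𝔏 x = (hG x).choose := fun x => ((hG x).choose_spec.1.fderiv)
  have happ : ∀ (y : (Fin n → ℝ) × (Fin n → ℝ) × (Fin m → ℝ)),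
      Continuous (fun x => fderiv ℝ 𝔏 x y) := by
    intro y
    exact (ContinuousLinearMap.apply ℝ ℝ y).continuous.comp hfd
  refine ⟨continuous_pi fun i => ?_, continuous_pi fun i => ?_, continuous_pi fun i => ?_⟩
  · have : (fun x => Gq x i) = fun x => fderiv ℝ 𝔏 x (Pi.single i 1, 0, 0) := by
      funext x
      rw [key x, (hG x).choose_spec.2 (Pi.single i 1, 0, 0)]
      simp [dot_single_right, dot_zero_right]
    rw [this]; exact happ _
  · have : (fun x => Gv x i) = fun x => fderiv ℝ 𝔏 x (0, Pi.single i 1, 0) := by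
      funext x
      rw [key x, (hG x).choose_spec.2 (0, Pi.single i 1, 0)]
      simp [dot_single_right, dot_zero_right]
    rw [this]; exact happ _
  · have : (fun x => Gl x i) = fun x => fderiv ℝ 𝔏 x (0, 0, Pi.single i 1) := by
      funext x
      rw [key x, (hG x).choose_spec.2 (0, 0, Pi.single i 1)]
      simp [dot_single_right, dot_zero_right]
    rw [this]; exact happ _
lemma hp_hasDerivAt {n m : ℕ}
    (𝔏 : (Fin n → ℝ) × (Fin n → ℝ) × (Fin m → ℝ) → ℝ)
    (Gq Gv : (Fin n → ℝ) × (Fin n → ℝ) × (Fin m → ℝ) → Fin n → ℝ)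
    (Gl : (Fin n → ℝ) × (Fin n → ℝ) × (Fin m → ℝ) → Fin m → ℝ)
    (h𝔏 : ContDiff ℝ 1 𝔏)
    (hG : ∀ x : (Fin n → ℝ) × (Fin n → ℝ) × (Fin m → ℝ),
      ∃ f : ((Fin n → ℝ) × (Fin n → ℝ) × (Fin m → ℝ)) →L[ℝ] ℝ,
        HasFDerivAt 𝔏 f x ∧
        ∀ y : (Fin n → ℝ) × (Fin n → ℝ) × (Fin m → ℝ),
          f y = dot (Gq x) y.1 + dot (Gv x) y.2.1 + dot (Gl x) y.2.2)
    (t₁ t₂ : ℝ)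
    (q v p : ℝ → Fin n → ℝ) (l : ℝ → Fin m → ℝ)
    (hq : ContDiff ℝ 1 q) (hv : ContDiff ℝ 1 v) (hp : ContDiff ℝ 1 p)
    (hl : ContDiff ℝ 1 l)
    (δq δv δp : ℝ → Fin n → ℝ) (δl : ℝ → Fin m → ℝ)
    (hδq : ContDiff ℝ 1 δq) (hδv : ContDiff ℝ 1 δv) (hδp : ContDiff ℝ 1 δp)
    (hδl : ContDiff ℝ 1 δl) :
    HasDerivAt (fun s : ℝ => ∫ t in t₁..t₂,
      (𝔏 (q t + s • δq t, v t + s • δv t, l t + s • δl t) +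
        dot (p t + s • δp t)
          (deriv q t + s • deriv δq t - v t - s • δv t)))
      (∫ t in t₁..t₂,
        (dot (Gq (q t, v t, l t)) (δq t) + dot (Gv (q t, v t, l t)) (δv t)
          + dot (Gl (q t, v t, l t)) (δl t)
          + dot (δp t) (deriv q t - v t)
          + dot (p t) (deriv δq t - δv t))) 0 := by
  obtain ⟨hGqc, hGvc, hGlc⟩ := G_eq_fderiv 𝔏 Gq Gv Gl h𝔏 hG
  -- notation
  set X : ℝ → ℝ → (Fin n → ℝ) × (Fin n → ℝ) × (Fin m → ℝ) :=
    fun s t => (q t + s • δq t, v t + s • δv t, l t + s • δl t) with hX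
  set F : ℝ → ℝ → ℝ := fun s t =>
    𝔏 (X s t) + dot (p t + s • δp t) (deriv q t + s • deriv δq t - v t - s • δv t) with hF
  set F' : ℝ → ℝ → ℝ := fun s t =>
    dot (Gq (X s t)) (δq t) + dot (Gv (X s t)) (δv t) + dot (Gl (X s t)) (δl t)
      + dot (δp t) (deriv q t + s • deriv δq t - v t - s • δv t)
      + dot (p t + s • δp t) (deriv δq t - δv t) with hF'
  -- continuity facts
  have hq' := hq.continuous_deriv le_rfl
  have hδq' := hδq.continuous_deriv le_rfl
  have hXc : Continuous (fun st : ℝ × ℝ => X st.1 st.2) := by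
    refine Continuous.prodMk ?_ (Continuous.prodMk ?_ ?_)
    · exact (hq.continuous.comp continuous_snd).add
        (continuous_fst.smul (hδq.continuous.comp continuous_snd))
    · exact (hv.continuous.comp continuous_snd).add
        (continuous_fst.smul (hδv.continuous.comp continuous_snd))
    · exact (hl.continuous.comp continuous_snd).add
        (continuous_fst.smul (hδl.continuous.comp continuous_snd))
  have hF'c : Continuous (fun st : ℝ × ℝ => F' st.1 st.2) := by
    refine Continuous.add (Continuous.add (Continuous.add (Continuous.add ?_ ?_) ?_) ?_) ?_
    · exact continuous_dot (hGqc.comp hXc) (hδq.continuous.comp continuous_snd)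
    · exact continuous_dot (hGvc.comp hXc) (hδv.continuous.comp continuous_snd)
    · exact continuous_dot (hGlc.comp hXc) (hδl.continuous.comp continuous_snd)
    · refine continuous_dot (hδp.continuous.comp continuous_snd) ?_
      exact (((hq'.comp continuous_snd).add
        (continuous_fst.smul (hδq'.comp continuous_snd))).sub
        (hv.continuous.comp continuous_snd)).sub
        (continuous_fst.smul (hδv.continuous.comp continuous_snd))
    · refine continuous_dot ?_ ((hδq'.sub hδv.continuous).comp continuous_snd)
      exact (hp.continuous.comp continuous_snd).add
        (continuous_fst.smul (hδp.continuous.comp continuous_snd))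
  have hFsc : ∀ s, Continuous (F s) := by
    intro s
    refine Continuous.add (h𝔏.continuous.comp ?_) ?_
    · exact hXc.comp (Continuous.prodMk continuous_const continuous_id)
    · refine continuous_dot (hp.continuous.add (hδp.continuous.const_smul s)) ?_
      exact ((hq'.add (hδq'.const_smul s)).sub hv.continuous).sub
        (hδv.continuous.const_smul s)
  -- pointwise derivative in s
  have hdiff : ∀ (s t : ℝ), HasDerivAt (fun s => F s t) (F' s t) s := by
    intro s t
    have hcurve : HasDerivAt (fun s => X s t) (δq t, δv t, δl t) s := by
      refine HasDerivAt.prodMk ?_ (HasDerivAt.prodMk ?_ ?_)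
      · exact hasDerivAt_affine_pi (q t) (δq t) s
      · exact hasDerivAt_affine_pi (v t) (δv t) s
      · exact hasDerivAt_affine_pi (l t) (δl t) s
    obtain ⟨f, hf, hform⟩ := hG (X s t)
    have h1 : HasDerivAt (fun s => 𝔏 (X s t)) (f (δq t, δv t, δl t)) s :=
      hf.comp_hasDerivAt s hcurve
    have h2 := hasDerivAt_dot_affine (p t) (δp t) (deriv q t) (deriv δq t) (v t) (δv t) s
    have := h1.add h2
    have hval : f (δq t, δv t, δl t) +
        (dot (δp t) (deriv q t + s • deriv δq t - v t - s • δv t)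
          + dot (p t + s • δp t) (deriv δq t - δv t)) = F' s t := by
      rw [hform (δq t, δv t, δl t)]
      simp only [hF']
      ring
    rw [← hval]
    exact this
  -- uniform bound on a compact set
  obtain ⟨C, hC⟩ : ∃ C, ∀ st ∈ (Set.Icc (-1 : ℝ) 1) ×ˢ Set.uIcc t₁ t₂,
      ‖F' st.1 st.2‖ ≤ C := by
    apply IsCompact.exists_bound_of_continuousOn (isCompact_Icc.prod isCompact_uIcc)
    exact hF'c.continuousOn
  have main := hasDerivAt_integral_of_dominated_loc_of_deriv_le (F := F) (F' := F')
    (μ := MeasureTheory.volume) (x₀ := (0:ℝ)) (a := t₁) (b := t₂) (bound := fun _ => C) (s := Metric.ball (0:ℝ) 1) (Metric.ball_mem_nhds _ one_pos)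
    (Filter.Eventually.of_forall fun s => ((hFsc s).aestronglyMeasurable).restrict)
    ((hFsc 0).intervalIntegrable _ _)
    (((hF'c.comp (Continuous.prodMk continuous_const continuous_id)).aestronglyMeasurable).restrict)
    (Filter.Eventually.of_forall fun t ht => fun s hs => by
      apply hC (s, t)
      refine ⟨?_, Set.uIoc_subset_uIcc ht⟩
      have : |s| < 1 := by simpa [Real.dist_eq] using hs
      exact Set.mem_Icc.2 (abs_le.1 this.le))
    (intervalIntegrable_const)
    (Filter.Eventually.of_forall fun t ht => fun s hs => hdiff s t)
  have h0 : (∫ t in t₁..t₂, F' 0 t) = ∫ t in t₁..t₂,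
      (dot (Gq (q t, v t, l t)) (δq t) + dot (Gv (q t, v t, l t)) (δv t)
        + dot (Gl (q t, v t, l t)) (δl t)
        + dot (δp t) (deriv q t - v t)
        + dot (p t) (deriv δq t - δv t)) := by
    apply intervalIntegral.integral_congr
    intro t _
    simp [hF', hX]
  rw [h0] at main
  exact main.2
lemma E_hasFDerivAt {n m : ℕ}
    (𝔏 : (Fin n → ℝ) × (Fin n → ℝ) × (Fin m → ℝ) → ℝ)
    (Gq Gv : (Fin n → ℝ) × (Fin n → ℝ) × (Fin m → ℝ) → Fin n → ℝ)
    (Gl : (Fin n → ℝ) × (Fin n → ℝ) × (Fin m → ℝ) → Fin m → ℝ)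
    (hG : ∀ x : (Fin n → ℝ) × (Fin n → ℝ) × (Fin m → ℝ),
      ∃ f : ((Fin n → ℝ) × (Fin n → ℝ) × (Fin m → ℝ)) →L[ℝ] ℝ,
        HasFDerivAt 𝔏 f x ∧
        ∀ y : (Fin n → ℝ) × (Fin n → ℝ) × (Fin m → ℝ),
          f y = dot (Gq x) y.1 + dot (Gv x) y.2.1 + dot (Gl x) y.2.2)
    (E : (Fin n → ℝ) × (Fin n → ℝ) × (Fin n → ℝ) × (Fin m → ℝ) → ℝ)
    (hE : ∀ x : (Fin n → ℝ) × (Fin n → ℝ) × (Fin n → ℝ) × (Fin m → ℝ),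
      E x = dot x.2.2.1 x.2.1 - 𝔏 (x.1, x.2.1, x.2.2.2))
    (a : (Fin n → ℝ) × (Fin n → ℝ) × (Fin n → ℝ) × (Fin m → ℝ)) :
    ∃ g : ((Fin n → ℝ) × (Fin n → ℝ) × (Fin n → ℝ) × (Fin m → ℝ)) →L[ℝ] ℝ,
      HasFDerivAt E g a ∧
      ∀ ζ : (Fin n → ℝ) × (Fin n → ℝ) × (Fin n → ℝ) × (Fin m → ℝ),
        g ζ = dot a.2.2.1 ζ.2.1 + dot a.2.1 ζ.2.2.1
          - (dot (Gq (a.1, a.2.1, a.2.2.2)) ζ.1 + dot (Gv (a.1, a.2.1, a.2.2.2)) ζ.2.1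
             + dot (Gl (a.1, a.2.1, a.2.2.2)) ζ.2.2.2) := by
  classical
  obtain rfl : E = fun x => dot x.2.2.1 x.2.1 - 𝔏 (x.1, x.2.1, x.2.2.2) := funext hE
  -- projection CLMs
  set P1 : ((Fin n → ℝ) × (Fin n → ℝ) × (Fin n → ℝ) × (Fin m → ℝ)) →L[ℝ] (Fin n → ℝ) := ContinuousLinearMap.fst ℝ (Fin n → ℝ) ((Fin n → ℝ) × (Fin n → ℝ) × (Fin m → ℝ)) with hP1
  set P2 : ((Fin n → ℝ) × (Fin n → ℝ) × (Fin n → ℝ) × (Fin m → ℝ)) →L[ℝ] (Fin n → ℝ) :=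
    (ContinuousLinearMap.fst ℝ (Fin n → ℝ) ((Fin n → ℝ) × (Fin m → ℝ))).comp (ContinuousLinearMap.snd ℝ (Fin n → ℝ) ((Fin n → ℝ) × (Fin n → ℝ) × (Fin m → ℝ))) with hP2
  set P3 : ((Fin n → ℝ) × (Fin n → ℝ) × (Fin n → ℝ) × (Fin m → ℝ)) →L[ℝ] (Fin n → ℝ) :=
    ((ContinuousLinearMap.fst ℝ (Fin n → ℝ) (Fin m → ℝ)).comp (ContinuousLinearMap.snd ℝ (Fin n → ℝ) ((Fin n → ℝ) × (Fin m → ℝ)))).comp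
      (ContinuousLinearMap.snd ℝ (Fin n → ℝ) ((Fin n → ℝ) × (Fin n → ℝ) × (Fin m → ℝ))) with hP3
  set P4 : ((Fin n → ℝ) × (Fin n → ℝ) × (Fin n → ℝ) × (Fin m → ℝ)) →L[ℝ] (Fin m → ℝ) :=
    ((ContinuousLinearMap.snd ℝ (Fin n → ℝ) (Fin m → ℝ)).comp (ContinuousLinearMap.snd ℝ (Fin n → ℝ) ((Fin n → ℝ) × (Fin m → ℝ)))).comp
      (ContinuousLinearMap.snd ℝ (Fin n → ℝ) ((Fin n → ℝ) × (Fin n → ℝ) × (Fin m → ℝ))) with hP4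
  set π : ((Fin n → ℝ) × (Fin n → ℝ) × (Fin n → ℝ) × (Fin m → ℝ)) →L[ℝ] ((Fin n → ℝ) × (Fin n → ℝ) × (Fin m → ℝ)) := P1.prod (P2.prod P4) with hπ
  have hπ_apply : ∀ x : (Fin n → ℝ) × (Fin n → ℝ) × (Fin n → ℝ) × (Fin m → ℝ), π x = (x.1, x.2.1, x.2.2.2) := fun x => rfl
  obtain ⟨f, hf, hform⟩ := hG (a.1, a.2.1, a.2.2.2)
  -- derivative of the dot part
  set D : ((Fin n → ℝ) × (Fin n → ℝ) × (Fin n → ℝ) × (Fin m → ℝ)) →L[ℝ] ℝ :=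
    ∑ i : Fin n, (a.2.2.1 i • ((ContinuousLinearMap.proj i).comp P2)
      + a.2.1 i • ((ContinuousLinearMap.proj i).comp P3)) with hD
  have hdot : HasFDerivAt (fun x : (Fin n → ℝ) × (Fin n → ℝ) × (Fin n → ℝ) × (Fin m → ℝ) => dot x.2.2.1 x.2.1) D a := by
    have : HasFDerivAt (fun x : (Fin n → ℝ) × (Fin n → ℝ) × (Fin n → ℝ) × (Fin m → ℝ) => ∑ i, x.2.2.1 i * x.2.1 i) D a := by
      rw [hD]
      apply HasFDerivAt.fun_sum
      intro i _
      have h3 : HasFDerivAt (fun x : (Fin n → ℝ) × (Fin n → ℝ) × (Fin n → ℝ) × (Fin m → ℝ) => x.2.2.1 i)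
          ((ContinuousLinearMap.proj i).comp P3) a :=
        ((ContinuousLinearMap.proj (R := ℝ) (φ := fun _ : Fin n => ℝ) i).comp P3).hasFDerivAt
      have h2 : HasFDerivAt (fun x : (Fin n → ℝ) × (Fin n → ℝ) × (Fin n → ℝ) × (Fin m → ℝ) => x.2.1 i)
          ((ContinuousLinearMap.proj i).comp P2) a :=
        ((ContinuousLinearMap.proj (R := ℝ) (φ := fun _ : Fin n => ℝ) i).comp P2).hasFDerivAt
      exact h3.mul h2
    exact this
  have hcomp : HasFDerivAt (fun x : (Fin n → ℝ) × (Fin n → ℝ) × (Fin n → ℝ) × (Fin m → ℝ) => 𝔏 (x.1, x.2.1, x.2.2.2)) (f.comp π) a := by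
    have := hf.comp a π.hasFDerivAt
    exact this
  refine ⟨D - f.comp π, hdot.sub hcomp, ?_⟩
  intro ζ
  have hDζ : D ζ = dot a.2.2.1 ζ.2.1 + dot a.2.1 ζ.2.2.1 := by
    rw [hD]
    simp only [ContinuousLinearMap.sum_apply, ContinuousLinearMap.add_apply,
      ContinuousLinearMap.smul_apply, ContinuousLinearMap.comp_apply,
      ContinuousLinearMap.proj_apply, smul_eq_mul]
    rw [dot, dot, ← Finset.sum_add_distrib]
    apply Finset.sum_congr rfl
    intro i _
    simp [hP2, hP3]
  rw [ContinuousLinearMap.sub_apply, hDζ, ContinuousLinearMap.comp_apply, hπ_apply,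
    hform (ζ.1, ζ.2.1, ζ.2.2.2)]
/-- equivalence theorem for vakonomic mechanics in local
coordinates.  For a `C¹` curve `x(t) = (q(t),v(t),p(t),λ(t))` and a `C¹`
vakonomic Lagrangian `𝔏` with partial gradients `Gq, Gv, Gl`, the following
are equivalent:
(1) the Hamilton-Pontryagin principle holds;
(2) `Ω̄(x'(t),·)` equals the Fréchet derivative of the generalized energy
    `E(q,v,p,λ) = p·v − 𝔏(q,v,λ)` at `x(t)` for all `t`;
(3) the implicit vakonomic Euler-Lagrange equations hold;
(4) `p(t) = ∂𝔏/∂v` and `Ω̂((q'(t),p'(t),λ'(t)),·)` equals the functional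
    `(δq,δp,δλ) ↦ (−∂𝔏/∂q)·δq + v·δp + (∂𝔏/∂λ)·δλ` for all `t`. -/
theorem vakonomic_equivalence {n m : ℕ}
    (𝔏 : (Fin n → ℝ) × (Fin n → ℝ) × (Fin m → ℝ) → ℝ)
    (Gq Gv : (Fin n → ℝ) × (Fin n → ℝ) × (Fin m → ℝ) → Fin n → ℝ)
    (Gl : (Fin n → ℝ) × (Fin n → ℝ) × (Fin m → ℝ) → Fin m → ℝ)
    (h𝔏 : ContDiff ℝ 1 𝔏)
    (hG : ∀ x : (Fin n → ℝ) × (Fin n → ℝ) × (Fin m → ℝ),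
      ∃ f : ((Fin n → ℝ) × (Fin n → ℝ) × (Fin m → ℝ)) →L[ℝ] ℝ,
        HasFDerivAt 𝔏 f x ∧
        ∀ y : (Fin n → ℝ) × (Fin n → ℝ) × (Fin m → ℝ),
          f y = dot (Gq x) y.1 + dot (Gv x) y.2.1 + dot (Gl x) y.2.2)
    (E : (Fin n → ℝ) × (Fin n → ℝ) × (Fin n → ℝ) × (Fin m → ℝ) → ℝ)
    (hE : ∀ x : (Fin n → ℝ) × (Fin n → ℝ) × (Fin n → ℝ) × (Fin m → ℝ),
      E x = dot x.2.2.1 x.2.1 - 𝔏 (x.1, x.2.1, x.2.2.2))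
    (t₁ t₂ : ℝ) (ht : t₁ < t₂)
    (q v p : ℝ → Fin n → ℝ) (l : ℝ → Fin m → ℝ)
    (hq : ContDiff ℝ 1 q) (hv : ContDiff ℝ 1 v) (hp : ContDiff ℝ 1 p)
    (hl : ContDiff ℝ 1 l) :
    List.TFAE
      [ -- (1) the Hamilton-Pontryagin variational principle
        (∀ (δq δv δp : ℝ → Fin n → ℝ) (δl : ℝ → Fin m → ℝ),
          ContDiff ℝ 1 δq → ContDiff ℝ 1 δv → ContDiff ℝ 1 δp →
          ContDiff ℝ 1 δl → δq t₁ = 0 → δq t₂ = 0 →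
          HasDerivAt (fun s : ℝ => ∫ t in t₁..t₂,
            (𝔏 (q t + s • δq t, v t + s • δv t, l t + s • δl t) +
              dot (p t + s • δp t)
                (deriv q t + s • deriv δq t - v t - s • δv t)))
            0 0),
        -- (2) integral curve of the vakonomic Lagrange-Dirac system (D̄, E)
        (∀ t ∈ Set.Icc t₁ t₂,
          ∃ g : ((Fin n → ℝ) × (Fin n → ℝ) × (Fin n → ℝ) × (Fin m → ℝ)) →L[ℝ] ℝ,
            HasFDerivAt E g (q t, v t, p t, l t) ∧
            ∀ ζ : (Fin n → ℝ) × (Fin n → ℝ) × (Fin n → ℝ) × (Fin m → ℝ),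
              g ζ = dot (deriv q t) ζ.2.2.1 - dot (deriv p t) ζ.1),
        -- (3) implicit vakonomic Euler-Lagrange equations
        (∀ t ∈ Set.Icc t₁ t₂,
          p t = Gv (q t, v t, l t) ∧
          deriv q t = v t ∧
          deriv p t = Gq (q t, v t, l t) ∧
          Gl (q t, v t, l t) = 0),
        -- (4) solution of the vakonomic Lagrange-Dirac system (D̂, 𝔏)
        (∀ t ∈ Set.Icc t₁ t₂,
          p t = Gv (q t, v t, l t) ∧
          ∀ (δq δp : Fin n → ℝ) (δl : Fin m → ℝ),
            dot (deriv q t) δp - dot (deriv p t) δq =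
              dot (-(Gq (q t, v t, l t))) δq + dot (v t) δp +
                dot (Gl (q t, v t, l t)) δl) ] := by
  obtain ⟨hGqc, hGvc, hGlc⟩ := G_eq_fderiv 𝔏 Gq Gv Gl h𝔏 hG
  tfae_have 3 → 4 := by
    intro h3 t htm
    obtain ⟨hpv, hqv, hpq, hgl⟩ := h3 t htm
    refine ⟨hpv, ?_⟩
    intro δq δp δl
    rw [hqv, hpq, hgl, dot_neg_left, dot_zero_left]
    ring
  tfae_have 4 → 3 := by
    intro h4 t htm
    obtain ⟨hpv, hrel⟩ := h4 t htm
    refine ⟨hpv, ?_, ?_, ?_⟩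
    · funext i
      have := hrel 0 (Pi.single i 1) 0
      simp only [dot_zero_right, dot_single_right, dot_neg_left, dot_zero_left,
        sub_zero, add_zero, zero_add, neg_zero] at this
      linarith
    · funext i
      have := hrel (Pi.single i 1) 0 0
      simp only [dot_zero_right, dot_single_right, dot_neg_left, dot_zero_left,
        sub_zero, add_zero, zero_add, neg_zero, zero_sub, Pi.neg_apply] at this
      linarith
    · funext j
      have := hrel 0 0 (Pi.single j 1)
      simp only [dot_zero_right, dot_single_right, dot_neg_left, dot_zero_left,
        sub_zero, add_zero, zero_add, neg_zero, sub_self] at this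
      simp [this.symm]
  tfae_have 3 → 2 := by
    intro h3 t htm
    obtain ⟨hpv, hqv, hpq, hgl⟩ := h3 t htm
    obtain ⟨g, hg, hgf⟩ := E_hasFDerivAt 𝔏 Gq Gv Gl hG E hE (q t, v t, p t, l t)
    refine ⟨g, hg, ?_⟩
    intro ζ
    rw [hgf ζ]
    show dot (p t) ζ.2.1 + dot (v t) ζ.2.2.1
        - (dot (Gq (q t, v t, l t)) ζ.1 + dot (Gv (q t, v t, l t)) ζ.2.1
           + dot (Gl (q t, v t, l t)) ζ.2.2.2) = _
    rw [hqv, hpq, ← hpv, hgl, dot_zero_left]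
    ring
  tfae_have 2 → 3 := by
    intro h2 t htm
    obtain ⟨g, hg, hgf⟩ := h2 t htm
    obtain ⟨g', hg', hg'f⟩ := E_hasFDerivAt 𝔏 Gq Gv Gl hG E hE (q t, v t, p t, l t)
    have hgg : g = g' := hg.unique hg'
    have key : ∀ ζ : (Fin n → ℝ) × (Fin n → ℝ) × (Fin n → ℝ) × (Fin m → ℝ),
        dot (deriv q t) ζ.2.2.1 - dot (deriv p t) ζ.1 =
          dot (p t) ζ.2.1 + dot (v t) ζ.2.2.1
            - (dot (Gq (q t, v t, l t)) ζ.1 + dot (Gv (q t, v t, l t)) ζ.2.1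
               + dot (Gl (q t, v t, l t)) ζ.2.2.2) := by
      intro ζ
      rw [← hgf ζ, hgg]
      exact hg'f ζ
    refine ⟨?_, ?_, ?_, ?_⟩
    · funext i
      have := key (0, Pi.single i 1, 0, 0)
      simp only [dot_zero_right, dot_single_right, sub_zero, add_zero, zero_add,
        sub_self] at this
      linarith
    · funext i
      have := key (0, 0, Pi.single i 1, 0)
      simp only [dot_zero_right, dot_single_right, sub_zero, add_zero, zero_add,
        sub_self] at this
      linarith
    · funext i
      have := key (Pi.single i 1, 0, 0, 0)
      simp only [dot_zero_right, dot_single_right, sub_zero, add_zero, zero_add,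
        zero_sub, sub_self] at this
      linarith
    · funext j
      have := key (0, 0, 0, Pi.single j 1)
      simp only [dot_zero_right, dot_single_right, sub_zero, add_zero, zero_add,
        sub_self] at this
      show Gl (q t, v t, l t) j = 0
      linarith
  tfae_have 3 → 1 := by
    intro h3 δq δv δp δl hδq hδv hδp hδl he1 he2
    have main := hp_hasDerivAt 𝔏 Gq Gv Gl h𝔏 hG t₁ t₂ q v p l hq hv hp hl
      δq δv δp δl hδq hδv hδp hδl
    have hB : Continuous (fun t => dot (deriv p t) (δq t) + dot (p t) (deriv δq t)) :=
      (continuous_dot (hp.continuous_deriv le_rfl) hδq.continuous).add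
        (continuous_dot hp.continuous (hδq.continuous_deriv le_rfl))
    have hzero : (∫ t in t₁..t₂,
        (dot (Gq (q t, v t, l t)) (δq t) + dot (Gv (q t, v t, l t)) (δv t)
          + dot (Gl (q t, v t, l t)) (δl t)
          + dot (δp t) (deriv q t - v t)
          + dot (p t) (deriv δq t - δv t))) = 0 := by
      have hcongr : Set.EqOn
          (fun t => dot (Gq (q t, v t, l t)) (δq t) + dot (Gv (q t, v t, l t)) (δv t)
            + dot (Gl (q t, v t, l t)) (δl t)
            + dot (δp t) (deriv q t - v t)
            + dot (p t) (deriv δq t - δv t))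
          (fun t => dot (deriv p t) (δq t) + dot (p t) (deriv δq t))
          (Set.uIcc t₁ t₂) := by
        intro t htm
        rw [Set.uIcc_of_le ht.le] at htm
        obtain ⟨hpv, hqv, hpq, hgl⟩ := h3 t htm
        simp only [← hpq, ← hpv, hgl, hqv, dot_zero_left, sub_self, dot_zero_right,
          dot_sub_right]
        ring
      rw [intervalIntegral.integral_congr hcongr]
      have hftc : (∫ t in t₁..t₂,
          (dot (deriv p t) (δq t) + dot (p t) (deriv δq t))) =
          dot (p t₂) (δq t₂) - dot (p t₁) (δq t₁) := by
        apply intervalIntegral.integral_eq_sub_of_hasDerivAt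
        · intro t _
          exact hasDerivAt_dot (contDiff_curve_hasDerivAt hp t)
            (contDiff_curve_hasDerivAt hδq t)
        · exact hB.intervalIntegrable _ _
      rw [hftc, he1, he2, dot_zero_right, dot_zero_right, sub_zero]
    rwa [hzero] at main
  tfae_have 1 → 3 := by
    intro h1
    have key : ∀ (δq δv δp : ℝ → Fin n → ℝ) (δl : ℝ → Fin m → ℝ),
        ContDiff ℝ 1 δq → ContDiff ℝ 1 δv → ContDiff ℝ 1 δp → ContDiff ℝ 1 δl →
        δq t₁ = 0 → δq t₂ = 0 →
        (∫ t in t₁..t₂,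
          (dot (Gq (q t, v t, l t)) (δq t) + dot (Gv (q t, v t, l t)) (δv t)
            + dot (Gl (q t, v t, l t)) (δl t)
            + dot (δp t) (deriv q t - v t)
            + dot (p t) (deriv δq t - δv t))) = 0 := by
      intro δq δv δp δl hδq hδv hδp hδl he1 he2
      have main := hp_hasDerivAt 𝔏 Gq Gv Gl h𝔏 hG t₁ t₂ q v p l hq hv hp hl
        δq δv δp δl hδq hδv hδp hδl
      exact main.unique (h1 δq δv δp δl hδq hδv hδp hδl he1 he2)
    have hqvcont : Continuous (fun t => (q t, v t, l t)) :=
      (hq.continuous.prodMk (hv.continuous.prodMk hl.continuous))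
    -- claim: deriv q = v on [t₁, t₂]
    have hclaim_qv : ∀ i, ∀ t ∈ Set.Icc t₁ t₂, deriv q t i - v t i = 0 := by
      intro i
      apply fundamental_lemma ht
      · exact ((continuous_apply i).comp (hq.continuous_deriv le_rfl)).sub
          ((continuous_apply i).comp hv.continuous)
      · intro φ hφ hφ1 hφ2
        have k := key (fun _ => (0:Fin n → ℝ)) (fun _ => (0:Fin n → ℝ)) (fun t => φ t • (Pi.single i 1 : Fin n → ℝ)) (fun _ => (0:Fin m → ℝ))
          contDiff_const contDiff_const (hφ.smul contDiff_const) contDiff_const rfl rfl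
        rw [← k]
        apply intervalIntegral.integral_congr
        intro t _
        simp [dot_zero_right, dot_smul_left, dot_single_left, dot_single_right,
          dot_smul_right, dot_neg_right, deriv_const, Pi.sub_apply, sub_self,
          dot_sub_right, dot_zero_left, mul_sub]
    -- claim: Gv = p on [t₁, t₂]
    have hclaim_pv : ∀ i, ∀ t ∈ Set.Icc t₁ t₂, Gv (q t, v t, l t) i - p t i = 0 := by
      intro i
      apply fundamental_lemma ht
      · exact ((continuous_apply i).comp (hGvc.comp hqvcont)).sub
          ((continuous_apply i).comp hp.continuous)
      · intro φ hφ hφ1 hφ2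
        have k := key (fun _ => (0:Fin n → ℝ)) (fun t => φ t • (Pi.single i 1 : Fin n → ℝ)) (fun _ => (0:Fin n → ℝ)) (fun _ => (0:Fin m → ℝ))
          contDiff_const (hφ.smul contDiff_const) contDiff_const contDiff_const rfl rfl
        rw [← k]
        apply intervalIntegral.integral_congr
        intro t _
        simp [dot_zero_right, dot_smul_left, dot_single_left, dot_single_right,
          dot_smul_right, dot_neg_right, deriv_const, dot_sub_right, dot_zero_left]
        ring
    -- claim: Gl = 0 on [t₁, t₂]
    have hclaim_gl : ∀ j, ∀ t ∈ Set.Icc t₁ t₂, Gl (q t, v t, l t) j = 0 := by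
      intro j
      apply fundamental_lemma ht
      · exact (continuous_apply j).comp (hGlc.comp hqvcont)
      · intro φ hφ hφ1 hφ2
        have k := key (fun _ => (0:Fin n → ℝ)) (fun _ => (0:Fin n → ℝ)) (fun _ => (0:Fin n → ℝ)) (fun t => φ t • (Pi.single j 1 : Fin m → ℝ))
          contDiff_const contDiff_const contDiff_const (hφ.smul contDiff_const) rfl rfl
        rw [← k]
        apply intervalIntegral.integral_congr
        intro t _
        simp [dot_zero_right, dot_smul_left, dot_single_left, dot_single_right,
          dot_smul_right, dot_neg_right, deriv_const, dot_zero_left, sub_self,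
          dot_sub_right]
    -- claim: Gq = deriv p on [t₁, t₂]
    have hclaim_pq : ∀ i, ∀ t ∈ Set.Icc t₁ t₂, Gq (q t, v t, l t) i - deriv p t i = 0 := by
      intro i
      apply fundamental_lemma ht
      · exact ((continuous_apply i).comp (hGqc.comp hqvcont)).sub
          ((continuous_apply i).comp (hp.continuous_deriv le_rfl))
      · intro φ hφ hφ1 hφ2
        have hδqc : ContDiff ℝ 1 (fun t => φ t • (Pi.single i 1 : Fin n → ℝ)) :=
          hφ.smul contDiff_const
        have k := key (fun t => φ t • (Pi.single i 1 : Fin n → ℝ)) (fun _ => (0:Fin n → ℝ)) (fun _ => (0:Fin n → ℝ)) (fun _ => (0:Fin m → ℝ))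
          hδqc contDiff_const contDiff_const contDiff_const
          (by simp [hφ1]) (by simp [hφ2])
        -- rewrite the integrand of k
        have hderivδq : ∀ t : ℝ, deriv (fun t => φ t • (Pi.single i 1 : Fin n → ℝ)) t
            = deriv φ t • (Pi.single i 1 : Fin n → ℝ) := by
          intro t
          exact ((hφ.differentiable one_ne_zero t).hasDerivAt.smul_const _).deriv
        have k' : (∫ t in t₁..t₂, (φ t * Gq (q t, v t, l t) i + deriv φ t * p t i)) = 0 := by
          rw [← k]
          apply intervalIntegral.integral_congr
          intro t _
          simp [hderivδq t, dot_zero_right, dot_smul_left, dot_single_left,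
            dot_single_right, dot_smul_right, dot_neg_right, deriv_const,
            dot_zero_left, dot_sub_right, sub_self]
        -- integration by parts
        have hibp : (∫ t in t₁..t₂, (deriv φ t * p t i + φ t * deriv p t i)) = 0 := by
          have hftc : (∫ t in t₁..t₂, (deriv φ t * p t i + φ t * deriv p t i)) =
              φ t₂ * p t₂ i - φ t₁ * p t₁ i := by
            apply intervalIntegral.integral_eq_sub_of_hasDerivAt
            · intro t _
              exact ((hφ.differentiable one_ne_zero t).hasDerivAt).mul
                (hasDerivAt_comp_proj (contDiff_curve_hasDerivAt hp t) i)
            · apply Continuous.intervalIntegrable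
              exact ((hφ.continuous_deriv le_rfl).mul
                ((continuous_apply i).comp hp.continuous)).add
                (hφ.continuous.mul ((continuous_apply i).comp (hp.continuous_deriv le_rfl)))
          rw [hftc, hφ1, hφ2]
          ring
        have hint1 : IntervalIntegrable (fun t => φ t * Gq (q t, v t, l t) i
            + deriv φ t * p t i) MeasureTheory.volume t₁ t₂ := by
          apply Continuous.intervalIntegrable
          exact (hφ.continuous.mul ((continuous_apply i).comp (hGqc.comp hqvcont))).add
            ((hφ.continuous_deriv le_rfl).mul ((continuous_apply i).comp hp.continuous))
        have hint2 : IntervalIntegrable (fun t => deriv φ t * p t i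
            + φ t * deriv p t i) MeasureTheory.volume t₁ t₂ := by
          apply Continuous.intervalIntegrable
          exact ((hφ.continuous_deriv le_rfl).mul ((continuous_apply i).comp hp.continuous)).add
            (hφ.continuous.mul ((continuous_apply i).comp (hp.continuous_deriv le_rfl)))
        have : (∫ t in t₁..t₂, φ t * (Gq (q t, v t, l t) i - deriv p t i)) =
            (∫ t in t₁..t₂, (φ t * Gq (q t, v t, l t) i + deriv φ t * p t i))
              - ∫ t in t₁..t₂, (deriv φ t * p t i + φ t * deriv p t i) := by
          rw [← intervalIntegral.integral_sub hint1 hint2]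
          apply intervalIntegral.integral_congr
          intro t _
          ring
        rw [this, k', hibp, sub_zero]
    intro t htm
    refine ⟨?_, ?_, ?_, ?_⟩
    · funext i
      have := hclaim_pv i t htm
      linarith
    · funext i
      have := hclaim_qv i t htm
      have h2 : (deriv q t) i - v t i = 0 := this
      linarith
    · funext i
      have := hclaim_pq i t htm
      have h2 : Gq (q t, v t, l t) i - (deriv p t) i = 0 := this
      linarith
    · funext j
      exact hclaim_gl j t htm
  tfae_finish
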